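/- For 0 < r < n, the minimal matroid T_{r,n} has exactly r(n-r) + 1 bases. -/
import Mathlib


/-- For `0 < r < n`, the minimal matroid `T_{r,n}` has exactly `r(n-r) + 1` bases.
Its bases are the `r`-element subsets `B` of `{1, …, n}` containing at most one element of
`{r+1, …, n}` (equivalently, the sets `{b_1 < … < b_r}` with `b_j ≤ j + 1` for `j < r`). -/
theorem minimal_matroid_card_bases (n r : ℕ) (hr : 0 < r) (hrn : r < n) :
    ((Finset.Icc 1 n).powersetCard r |>.filter
        (fun B => (B ∩ Finset.Ioc r n).card ≤ 1)).card = r * (n - r) + 1 := by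
  classical
  have hcardIcc : (Finset.Icc 1 r).card = r := by
    rw [Nat.card_Icc]; omega
  have key : ((Finset.Icc 1 n).powersetCard r |>.filter
        (fun B => (B ∩ Finset.Ioc r n).card ≤ 1)) =
      insert (Finset.Icc 1 r)
        ((Finset.Ioc r n ×ˢ Finset.Icc 1 r).image
          fun p => insert p.1 (Finset.Icc 1 r \ {p.2})) := by
    ext B
    simp only [Finset.mem_filter, Finset.mem_powersetCard, Finset.mem_insert,
      Finset.mem_image, Finset.mem_product, Prod.exists]
    constructor
    · rintro ⟨⟨hsub, hcard⟩, hle⟩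
      rcases Nat.le_one_iff_eq_zero_or_eq_one.mp hle with h0 | h1
      · left
        rw [Finset.card_eq_zero] at h0
        have hsub' : B ⊆ Finset.Icc 1 r := by
          intro b hb
          have hb1 := hsub hb
          simp only [Finset.mem_Icc] at hb1 ⊢
          have : b ∉ Finset.Ioc r n := by
            intro hmem
            have : b ∈ B ∩ Finset.Ioc r n := Finset.mem_inter.mpr ⟨hb, hmem⟩
            rw [h0] at this; exact absurd this (Finset.notMem_empty b)
          simp only [Finset.mem_Ioc, not_and, not_le] at this
          omega
        exact (Finset.eq_of_subset_of_card_le hsub' (by omega)).symm ▸ rfl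
      · right
        obtain ⟨x, hx⟩ := Finset.card_eq_one.mp h1
        have hxB : x ∈ B ∧ x ∈ Finset.Ioc r n := by
          have : x ∈ B ∩ Finset.Ioc r n := hx ▸ Finset.mem_singleton_self x
          exact Finset.mem_inter.mp this
        have hxIoc := hxB.2
        simp only [Finset.mem_Ioc] at hxIoc
        have herase : B.erase x ⊆ Finset.Icc 1 r := by
          intro b hb
          have hbB := Finset.mem_of_mem_erase hb
          have hbne := Finset.ne_of_mem_erase hb
          have hb1 := hsub hbB
          simp only [Finset.mem_Icc] at hb1 ⊢
          have : b ∉ Finset.Ioc r n := by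
            intro hmem
            have : b ∈ B ∩ Finset.Ioc r n := Finset.mem_inter.mpr ⟨hbB, hmem⟩
            rw [hx, Finset.mem_singleton] at this
            exact hbne this
          simp only [Finset.mem_Ioc, not_and, not_le] at this
          omega
        have hec : (B.erase x).card = r - 1 := by
          rw [Finset.card_erase_of_mem hxB.1, hcard]
        have hdiff : (Finset.Icc 1 r \ B.erase x).card = 1 := by
          rw [Finset.card_sdiff_of_subset herase, hcardIcc, hec]; omega
        obtain ⟨y, hy⟩ := Finset.card_eq_one.mp hdiff
        have hyIcc : y ∈ Finset.Icc 1 r ∧ y ∉ B.erase x := by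
          have : y ∈ Finset.Icc 1 r \ B.erase x := hy ▸ Finset.mem_singleton_self y
          exact Finset.mem_sdiff.mp this
        refine ⟨x, y, ⟨hxB.2, hyIcc.1⟩, ?_⟩
        have hsubset : B.erase x ⊆ Finset.Icc 1 r \ {y} := by
          intro b hb
          refine Finset.mem_sdiff.mpr ⟨herase hb, ?_⟩
          simp only [Finset.mem_singleton]
          rintro rfl
          exact hyIcc.2 hb
        have hcards : (Finset.Icc 1 r \ {y}).card ≤ (B.erase x).card := by
          rw [Finset.card_sdiff_of_subset (Finset.singleton_subset_iff.mpr hyIcc.1),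
            hcardIcc, Finset.card_singleton, hec]
        have heq : B.erase x = Finset.Icc 1 r \ {y} :=
          Finset.eq_of_subset_of_card_le hsubset hcards
        rw [← heq, Finset.insert_erase hxB.1]
    · rintro (rfl | ⟨x, y, ⟨hx, hy⟩, rfl⟩)
      · refine ⟨⟨Finset.Icc_subset_Icc_right (le_of_lt hrn), hcardIcc⟩, ?_⟩
        have : Finset.Icc 1 r ∩ Finset.Ioc r n = ∅ := by
          ext b
          simp only [Finset.mem_inter, Finset.mem_Icc, Finset.mem_Ioc,
            Finset.notMem_empty, iff_false]
          omega
        rw [this]; simp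
      · simp only [Finset.mem_Ioc, Finset.mem_Icc] at hx hy
        have hxnot : x ∉ Finset.Icc 1 r \ {y} := by
          simp only [Finset.mem_sdiff, Finset.mem_Icc, not_and]
          intro h; omega
        constructor
        · constructor
          · intro b hb
            rcases Finset.mem_insert.mp hb with rfl | hb'
            · simp only [Finset.mem_Icc]; omega
            · have := (Finset.mem_sdiff.mp hb').1
              simp only [Finset.mem_Icc] at this ⊢; omega
          · rw [Finset.card_insert_of_notMem hxnot,
              Finset.card_sdiff_of_subset (Finset.singleton_subset_iff.mpr
                (Finset.mem_Icc.mpr ⟨hy.1, hy.2⟩)), hcardIcc,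
              Finset.card_singleton]
            omega
        · have : insert x (Finset.Icc 1 r \ {y}) ∩ Finset.Ioc r n = {x} := by
            ext b
            simp only [Finset.mem_inter, Finset.mem_insert, Finset.mem_sdiff,
              Finset.mem_Icc, Finset.mem_singleton, Finset.mem_Ioc]
            constructor
            · rintro ⟨rfl | ⟨⟨h1, h2⟩, _⟩, h3, h4⟩
              · rfl
              · omega
            · rintro rfl; exact ⟨Or.inl rfl, hx.1, hx.2⟩
          rw [this, Finset.card_singleton]
  rw [key]
  have hnotmem : Finset.Icc 1 r ∉
      ((Finset.Ioc r n ×ˢ Finset.Icc 1 r).image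
        fun p => insert p.1 (Finset.Icc 1 r \ {p.2})) := by
    simp only [Finset.mem_image, Finset.mem_product, Prod.exists, not_exists]
    intro x y h
    obtain ⟨⟨hx, hy⟩, heq⟩ := h
    have : x ∈ Finset.Icc 1 r := heq ▸ Finset.mem_insert_self x _
    simp only [Finset.mem_Icc] at this
    simp only [Finset.mem_Ioc] at hx
    omega
  rw [Finset.card_insert_of_notMem hnotmem]
  have hinj : Set.InjOn (fun p : ℕ × ℕ => insert p.1 (Finset.Icc 1 r \ {p.2}))
      ((Finset.Ioc r n ×ˢ Finset.Icc 1 r : Finset (ℕ × ℕ)) : Set (ℕ × ℕ)) := by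
    rintro ⟨x, y⟩ hxy ⟨x', y'⟩ hxy' heq
    simp only [Finset.mem_coe, Finset.mem_product, Finset.mem_Ioc, Finset.mem_Icc]
      at hxy hxy'
    simp only at heq
    have hxx : x = x' := by
      have hx : x ∈ insert x' (Finset.Icc 1 r \ {y'}) := heq ▸ Finset.mem_insert_self x _
      rcases Finset.mem_insert.mp hx with h | h
      · exact h
      · exfalso
        have := (Finset.mem_sdiff.mp h).1
        simp only [Finset.mem_Icc] at this
        omega
    subst hxx
    have hyy : y = y' := by
      by_contra hne
      have hy'' : y ∈ insert x (Finset.Icc 1 r \ {y}) := by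
        rw [heq]
        exact Finset.mem_insert_of_mem (Finset.mem_sdiff.mpr
          ⟨Finset.mem_Icc.mpr ⟨hxy.2.1, hxy.2.2⟩, by simp [hne]⟩)
      rcases Finset.mem_insert.mp hy'' with h | h
      · omega
      · exact (Finset.mem_sdiff.mp h).2 (Finset.mem_singleton_self y)
    simp [hyy]
  rw [Finset.card_image_of_injOn hinj, Finset.card_product, Nat.card_Ioc, hcardIcc]
  ring
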